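/- Let d ≥ 3, real p ≥ n > d/2, and ℓ ∈ {1,2,3,...}. The sharp constant K_{pn} in the inequality ‖P(v,w)‖_p ≤ (K_{pn}/2)(‖v‖_p‖w‖_{n+1} + ‖v‖_n‖w‖_{p+1}) for divergence-free mean-zero fields on T^d satisfies K_{pn} ≥ (√2/(2π)^{d/2}) · √(1 + (1+4ℓ²)^p) / ( ℓ^p (1+ℓ²)^{(n+1)/2} + ℓ^n (1+ℓ²)^{(p+1)/2} ). -/

import Mathlib

open scoped BigOperators
noncomputable section

/-- Euclidean norm of a lattice point of `ℤ^d`. -/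
def latNorm {d : ℕ} (k : Fin d → ℤ) : ℝ := Real.sqrt (∑ i, ((k i : ℝ)) ^ 2)

/-- Euclidean norm of a vector of `ℂ^d`. -/
def cNorm {d : ℕ} (a : Fin d → ℂ) : ℝ := Real.sqrt (∑ i, ‖a i‖ ^ 2)

/-- A divergence-free mean-zero vector field on the torus `T^d = (ℝ/2πℤ)^d` is represented
by the family of its Fourier coefficients `v_k ∈ ℂ^d`, `k ∈ ℤ^d`. -/
def Coeff (d : ℕ) := (Fin d → ℤ) → (Fin d → ℂ)

/-- Bilinear dot product `k · a` of a lattice vector with a vector of `ℂ^d`. -/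
def dotC {d : ℕ} (k : Fin d → ℤ) (a : Fin d → ℂ) : ℂ := ∑ i, (k i : ℂ) * a i

/-- The projection `Π_k` of `ℂ^d` onto `k^⊥`: `Π_k c = c - ((k·c)/|k|²) k` for `k ≠ 0`,
and `Π_0 c = c`. -/
def leray {d : ℕ} (k : Fin d → ℤ) (a : Fin d → ℂ) : Fin d → ℂ :=
  if k = 0 then a else fun i => a i - dotC k a / (latNorm k : ℂ) ^ 2 * (k i : ℂ)

/-- The Sobolev norm of order `m`: `‖v‖_m² = Σ_{k ≠ 0} |k|^{2m} |v_k|²`. -/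
def sobNorm {d : ℕ} (m : ℝ) (v : Coeff d) : ℝ :=
  Real.sqrt (∑' k : {k : Fin d → ℤ // k ≠ 0},
    latNorm (k : Fin d → ℤ) ^ (2 * m) * cNorm (v (k : Fin d → ℤ)) ^ 2)

/-- Membership in the Sobolev space `H^m` (finiteness of the norm). -/
def inHm {d : ℕ} (m : ℝ) (v : Coeff d) : Prop :=
  Summable (fun k : {k : Fin d → ℤ // k ≠ 0} =>
    latNorm (k : Fin d → ℤ) ^ (2 * m) * cNorm (v (k : Fin d → ℤ)) ^ 2)

/-- Divergence-free: `k · v_k = 0` for all `k`. -/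
def divFree {d : ℕ} (v : Coeff d) : Prop := ∀ k, dotC k (v k) = 0

/-- Mean zero: `v_0 = 0`. -/
def meanZero {d : ℕ} (v : Coeff d) : Prop := v 0 = 0

/-- Reality of the field: `v_{-k} = conj(v_k)`. -/
def realField {d : ℕ} (v : Coeff d) : Prop :=
  ∀ k i, v (-k) i = starRingEnd ℂ (v k i)

/-- The Fourier coefficients of the Leray-projected advection term `P(v,w) = Π(v·∂w)`:
`P(v,w)_k = (i/(2π)^{d/2}) Σ_h (v_h · (k-h)) Π_k w_{k-h}`. -/
def Pcoef {d : ℕ} (v w : Coeff d) : Coeff d := fun k i =>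
  Complex.I / ((2 * Real.pi : ℝ) ^ ((d : ℝ) / 2) : ℝ) *
    ∑' h : Fin d → ℤ, dotC (k - h) (v h) * leray k (w (k - h)) i

/-- `K` is an admissible constant for the tame inequality
`‖P(v,w)‖_p ≤ (K/2)(‖v‖_p ‖w‖_{n+1} + ‖v‖_n ‖w‖_{p+1})` over all divergence-free
mean-zero real fields `v ∈ H^p`, `w ∈ H^{p+1}`. -/
def tameIneq (d : ℕ) (p n K : ℝ) : Prop :=
  ∀ v w : Coeff d, divFree v → divFree w → meanZero v → meanZero w →
    realField v → realField w → inHm p v → inHm (p + 1) w →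
    sobNorm p (Pcoef v w) ≤
      K / 2 * (sobNorm p v * sobNorm (n + 1) w + sobNorm n v * sobNorm (p + 1) w)

namespace TrialAux

variable {d : ℕ}

lemma latNorm_neg (k : Fin d → ℤ) : latNorm (-k) = latNorm k := by
  unfold latNorm; congr 1; apply Finset.sum_congr rfl; intro i _
  simp only [Pi.neg_apply]; push_cast; ring

lemma cNorm_zero : cNorm (0 : Fin d → ℂ) = 0 := by
  unfold cNorm; simp

lemma dotC_zero (k : Fin d → ℤ) : dotC k (0 : Fin d → ℂ) = 0 := by
  unfold dotC; simp

lemma leray_zero (k : Fin d → ℤ) : leray k (0 : Fin d → ℂ) = 0 := by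
  unfold leray; split
  · rfl
  · funext i; simp [dotC_zero]

lemma leray_of_dot (k : Fin d → ℤ) (a : Fin d → ℂ) (h : dotC k a = 0) : leray k a = a := by
  unfold leray; split
  · rfl
  · funext i; simp [h]

lemma dotC_mul_ind (k : Fin d → ℤ) (c : ℂ) (j1 : Fin d) :
    dotC k (fun j => c * (if j = j1 then 1 else 0)) = (k j1 : ℂ) * c := by
  unfold dotC
  rw [Finset.sum_eq_single j1]
  · simp
  · intro b _ hb; simp [hb]
  · intro h; exact absurd (Finset.mem_univ _) h

lemma cNorm_mul_ind (c : ℂ) (j1 : Fin d) :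
    cNorm (fun j => c * (if j = j1 then 1 else 0)) = ‖c‖ := by
  unfold cNorm
  rw [show ∑ i, ‖c * (if i = j1 then 1 else 0)‖ ^ 2
      = ∑ i, (if i = j1 then ‖c‖ ^ 2 else 0) from
    Finset.sum_congr rfl (by intro i _; split <;> simp)]
  rw [Finset.sum_ite_eq']
  simp [Real.sqrt_sq (norm_nonneg c)]

lemma inHm_of_support (m : ℝ) (v : Coeff d) (S : Finset {k : Fin d → ℤ // k ≠ 0})
    (hv : ∀ k : {k : Fin d → ℤ // k ≠ 0}, k ∉ S → v k = 0) : inHm m v := by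
  apply summable_of_ne_finset_zero (s := S)
  intro k hk; rw [hv k hk, cNorm_zero]; ring

lemma sobNorm_of_support (m : ℝ) (v : Coeff d) (S : Finset {k : Fin d → ℤ // k ≠ 0})
    (hv : ∀ k : {k : Fin d → ℤ // k ≠ 0}, k ∉ S → v k = 0) :
    sobNorm m v
      = Real.sqrt (∑ k ∈ S, latNorm (k : Fin d → ℤ) ^ (2*m) * cNorm (v k) ^ 2) := by
  unfold sobNorm; congr 1
  apply tsum_eq_sum
  intro k hk; rw [hv k hk, cNorm_zero]; ring

lemma sqrt_rpow_two_mul (x : ℝ) (hx : 0 ≤ x) (m : ℝ) :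
    Real.sqrt x ^ (2*m) = x ^ m := by
  rw [Real.sqrt_eq_rpow, ← Real.rpow_mul hx]
  congr 1; ring

lemma rpow_eq_sq_half (x : ℝ) (hx : 0 ≤ x) (m : ℝ) : x ^ m = (x ^ (m/2)) ^ (2:ℕ) := by
  rw [← Real.rpow_natCast (x ^ (m/2)) 2, ← Real.rpow_mul hx]
  congr 1; push_cast; ring

lemma sum_sq_two (i0 i1 : Fin d) (h : i0 ≠ i1) (x y : ℤ) :
    ∑ i, (((if i = i0 then x else if i = i1 then y else 0 : ℤ) : ℝ)) ^ 2
      = (x:ℝ)^2 + (y:ℝ)^2 := by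
  rw [show (∑ i, (((if i = i0 then x else if i = i1 then y else 0 : ℤ) : ℝ)) ^ 2)
      = ∑ i, ((if i = i0 then (x:ℝ)^2 else 0) + (if i = i1 then (y:ℝ)^2 else 0)) from
    Finset.sum_congr rfl (by
      intro i _
      by_cases h0 : i = i0
      · subst h0; simp [h]
      · by_cases h1 : i = i1
        · subst h1; simp [h0]
        · simp [h0, h1])]
  rw [Finset.sum_add_distrib, Finset.sum_ite_eq', Finset.sum_ite_eq']
  simp

end TrialAux

namespace TrialAux

variable {d : ℕ}

/-- lattice vector with entries `x` at `i0`, `y` at `i1`, `0` elsewhere. -/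
def vec (i0 i1 : Fin d) (x y : ℤ) : Fin d → ℤ :=
  fun i => if i = i0 then x else if i = i1 then y else 0

variable {i0 i1 : Fin d}

lemma vec_apply0 (x y : ℤ) : vec i0 i1 x y i0 = x := by simp [vec]

lemma vec_apply1 (h : i0 ≠ i1) (x y : ℤ) : vec i0 i1 x y i1 = y := by
  simp [vec, h.symm]

lemma vec_apply_other {i : Fin d} (h0 : i ≠ i0) (h1 : i ≠ i1) (x y : ℤ) :
    vec i0 i1 x y i = 0 := by simp [vec, h0, h1]

lemma vec_add (x y x' y' : ℤ) :
    vec i0 i1 x y + vec i0 i1 x' y' = vec i0 i1 (x + x') (y + y') := by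
  funext i; simp only [Pi.add_apply, vec]; split_ifs <;> ring

lemma vec_neg (x y : ℤ) : -vec i0 i1 x y = vec i0 i1 (-x) (-y) := by
  funext i; simp only [Pi.neg_apply, vec]; split_ifs <;> ring

lemma vec_sub (x y x' y' : ℤ) :
    vec i0 i1 x y - vec i0 i1 x' y' = vec i0 i1 (x - x') (y - y') := by
  funext i; simp only [Pi.sub_apply, vec]; split_ifs <;> ring

lemma vec_inj (h : i0 ≠ i1) {x y x' y' : ℤ} :
    vec i0 i1 x y = vec i0 i1 x' y' ↔ (x = x' ∧ y = y') := by
  constructor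
  · intro he
    constructor
    · have := congrFun he i0; simpa [vec_apply0] using this
    · have := congrFun he i1; simpa [vec_apply1 h] using this
  · rintro ⟨rfl, rfl⟩; rfl

lemma vec_zero : vec i0 i1 0 0 = 0 := by
  funext i; simp [vec]

lemma vec_eq_zero (h : i0 ≠ i1) {x y : ℤ} :
    vec i0 i1 x y = 0 ↔ (x = 0 ∧ y = 0) := by
  rw [← vec_zero (i0 := i0) (i1 := i1), vec_inj h]

lemma latNorm_vec (h : i0 ≠ i1) (x y : ℤ) :
    latNorm (vec i0 i1 x y) = Real.sqrt ((x:ℝ)^2 + (y:ℝ)^2) := by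
  unfold latNorm vec
  rw [sum_sq_two i0 i1 h x y]

/-- the trial field: coefficient `i e_{j0}` at `k0`, `-i e_{j0}` at `-k0`. -/
def fld (k0 : Fin d → ℤ) (j0 : Fin d) : Coeff d :=
  fun k j => (if k = k0 then Complex.I else if k = -k0 then -Complex.I else 0) *
    (if j = j0 then 1 else 0)

variable {k0 : Fin d → ℤ} {j0 : Fin d}

lemma fld_self : fld k0 j0 k0 = fun j => Complex.I * (if j = j0 then 1 else 0) := by
  funext j; simp [fld]

lemma fld_negself (h : k0 ≠ -k0) :
    fld k0 j0 (-k0) = fun j => (-Complex.I) * (if j = j0 then 1 else 0) := by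
  have hne : -k0 ≠ k0 := Ne.symm h
  funext j; simp [fld, hne]

lemma fld_other {k : Fin d → ℤ} (h1 : k ≠ k0) (h2 : k ≠ -k0) : fld k0 j0 k = 0 := by
  funext j; simp [fld, h1, h2]

lemma divFree_fld (h : k0 j0 = 0) : divFree (fld k0 j0) := by
  intro k
  have : dotC k (fld k0 j0 k)
      = (k j0 : ℂ) * (if k = k0 then Complex.I else if k = -k0 then -Complex.I else 0) :=
    dotC_mul_ind k _ j0
  rw [this]
  by_cases h1 : k = k0
  · subst h1; rw [h]; simp
  · by_cases h2 : k = -k0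
    · subst h2; simp [h]
    · simp [h1, h2]

lemma meanZero_fld (h : k0 ≠ 0) : meanZero (fld k0 j0) := by
  have h1 : (0 : Fin d → ℤ) ≠ k0 := fun he => h he.symm
  have h2 : (0 : Fin d → ℤ) ≠ -k0 := fun he => h (neg_eq_zero.mp he.symm)
  exact fld_other h1 h2

lemma realField_fld (hkn : k0 ≠ -k0) : realField (fld k0 j0) := by
  intro k j
  show (if -k = k0 then Complex.I else if -k = -k0 then -Complex.I else 0) *
      (if j = j0 then 1 else 0)
    = starRingEnd ℂ ((if k = k0 then Complex.I else if k = -k0 then -Complex.I else 0) *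
      (if j = j0 then 1 else 0))
  rw [map_mul]
  have hind : starRingEnd ℂ ((if j = j0 then 1 else 0 : ℂ)) = (if j = j0 then 1 else 0) := by
    split <;> simp
  rw [hind]
  congr 1
  by_cases h1 : k = k0
  · have e1 : -k = -k0 := by rw [h1]
    have e2 : -k ≠ k0 := by rw [e1]; exact fun he => hkn he.symm
    rw [if_neg e2, if_pos e1, if_pos h1, Complex.conj_I]
  · by_cases h2 : k = -k0
    · have e1 : -k = k0 := by rw [h2, neg_neg]
      rw [if_pos e1, if_neg h1, if_pos h2, map_neg, Complex.conj_I, neg_neg]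
    · have e1 : -k ≠ k0 := fun he => h2 (by rw [← neg_neg k, he])
      have e2 : -k ≠ -k0 := fun he => h1 (neg_injective he)
      rw [if_neg e1, if_neg e2, if_neg h1, if_neg h2, map_zero]

lemma inHm_fld (m : ℝ) (hk0 : k0 ≠ 0) (hkn : k0 ≠ -k0) : inHm m (fld k0 j0) := by
  have hk0' : -k0 ≠ 0 := neg_ne_zero.mpr hk0
  apply inHm_of_support m _ ({⟨k0, hk0⟩, ⟨-k0, hk0'⟩} : Finset {k : Fin d → ℤ // k ≠ 0})
  rintro ⟨k, hk⟩ hmem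
  simp only [Finset.mem_insert, Finset.mem_singleton, Subtype.mk.injEq] at hmem
  push_neg at hmem
  exact fld_other hmem.1 hmem.2

lemma sobNorm_fld (m : ℝ) (hk0 : k0 ≠ 0) (hkn : k0 ≠ -k0) :
    sobNorm m (fld k0 j0) = Real.sqrt (2 * (∑ i, ((k0 i : ℝ))^2) ^ m) := by
  have hk0' : -k0 ≠ 0 := neg_ne_zero.mpr hk0
  rw [sobNorm_of_support m _ ({⟨k0, hk0⟩, ⟨-k0, hk0'⟩} : Finset {k : Fin d → ℤ // k ≠ 0})
    (by
      rintro ⟨k, hk⟩ hmem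
      simp only [Finset.mem_insert, Finset.mem_singleton, Subtype.mk.injEq] at hmem
      push_neg at hmem
      exact fld_other hmem.1 hmem.2)]
  have hpair : (⟨k0, hk0⟩ : {k : Fin d → ℤ // k ≠ 0}) ≠ ⟨-k0, hk0'⟩ := by
    simp only [ne_eq, Subtype.mk.injEq]; exact hkn
  rw [Finset.sum_pair hpair]
  have hs : (0:ℝ) ≤ ∑ i, ((k0 i : ℝ))^2 := by positivity
  have hl : latNorm k0 ^ (2*m) = (∑ i, ((k0 i : ℝ))^2) ^ m := by
    unfold latNorm; exact sqrt_rpow_two_mul _ hs m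
  have hl2 : latNorm (-k0) ^ (2*m) = (∑ i, ((k0 i : ℝ))^2) ^ m := by
    rw [latNorm_neg]; exact hl
  have hc1 : cNorm (fld k0 j0 k0) = 1 := by
    rw [fld_self, cNorm_mul_ind]; simp
  have hc2 : cNorm (fld k0 j0 (-k0)) = 1 := by
    rw [fld_negself hkn, cNorm_mul_ind]; simp
  rw [hl, hl2, hc1, hc2]
  ring_nf

lemma sqrt_two_mul_rpow (x : ℝ) (hx : 0 ≤ x) (m : ℝ) :
    Real.sqrt (2 * x ^ m) = Real.sqrt 2 * x ^ (m/2) := by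
  rw [Real.sqrt_mul (by norm_num : (0:ℝ) ≤ 2), rpow_eq_sq_half x hx m,
    Real.sqrt_sq (Real.rpow_nonneg hx _)]

lemma sq_rpow (x : ℝ) (hx : 0 ≤ x) (m : ℝ) : (x^2) ^ (m/2) = x ^ m := by
  rw [← Real.rpow_natCast x 2, ← Real.rpow_mul hx]
  congr 1; push_cast; ring

end TrialAux

namespace TrialAux

variable {d : ℕ}

lemma Pcoef_fld_eval {k0 : Fin d → ℤ} {j0 : Fin d} (hkn : k0 ≠ -k0)
    (w : Coeff d) (k : Fin d → ℤ) (j : Fin d) :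
    Pcoef (fld k0 j0) w k j =
      Complex.I / ((2 * Real.pi : ℝ) ^ ((d : ℝ) / 2) : ℝ) *
        ((((k - k0) j0 : ℤ) : ℂ) * Complex.I * leray k (w (k - k0)) j
          + (((k + k0) j0 : ℤ) : ℂ) * (-Complex.I) * leray k (w (k + k0)) j) := by
  unfold Pcoef
  congr 1
  rw [tsum_eq_sum (s := ({k0, -k0} : Finset (Fin d → ℤ))) ?_]
  · rw [Finset.sum_pair hkn]
    rw [fld_self, fld_negself hkn, dotC_mul_ind, dotC_mul_ind, sub_neg_eq_add]
  · intro h hh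
    simp only [Finset.mem_insert, Finset.mem_singleton] at hh
    push_neg at hh
    rw [fld_other hh.1 hh.2, dotC_zero, zero_mul]

lemma cNorm_Pcoef_left {k0 : Fin d → ℤ} {j0 : Fin d} (hkn : k0 ≠ -k0)
    (w : Coeff d) (k : Fin d → ℤ) (j2 : Fin d) (c1 : ℂ)
    (hw1 : w (k - k0) = fun j => c1 * (if j = j2 then 1 else 0))
    (hw2 : w (k + k0) = 0)
    (hdot : k j2 = 0) :
    cNorm (Pcoef (fld k0 j0) w k)
      = ‖c1‖ * |(((k - k0) j0 : ℤ) : ℝ)| / (2 * Real.pi) ^ ((d : ℝ) / 2) := by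
  have hCr : (0:ℝ) < (2 * Real.pi) ^ ((d : ℝ) / 2) := Real.rpow_pos_of_pos (by positivity) _
  have hd1 : dotC k (w (k - k0)) = 0 := by
    rw [hw1, dotC_mul_ind, hdot]; simp
  have heq : Pcoef (fld k0 j0) w k = fun j =>
      (Complex.I / ((2 * Real.pi : ℝ) ^ ((d : ℝ) / 2) : ℝ) *
        ((((k - k0) j0 : ℤ) : ℂ) * Complex.I * c1)) * (if j = j2 then 1 else 0) := by
    funext j
    rw [Pcoef_fld_eval hkn w k j, hw2, leray_zero, leray_of_dot _ _ hd1, hw1]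
    simp only [Pi.zero_apply]
    ring
  rw [heq, cNorm_mul_ind]
  simp only [norm_mul, norm_div, Complex.norm_I, Complex.norm_real, Real.norm_eq_abs,
    Complex.norm_intCast, abs_of_pos hCr]
  try ring

lemma cNorm_Pcoef_right {k0 : Fin d → ℤ} {j0 : Fin d} (hkn : k0 ≠ -k0)
    (w : Coeff d) (k : Fin d → ℤ) (j2 : Fin d) (c1 : ℂ)
    (hw1 : w (k - k0) = 0)
    (hw2 : w (k + k0) = fun j => c1 * (if j = j2 then 1 else 0))
    (hdot : k j2 = 0) :
    cNorm (Pcoef (fld k0 j0) w k)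
      = ‖c1‖ * |(((k + k0) j0 : ℤ) : ℝ)| / (2 * Real.pi) ^ ((d : ℝ) / 2) := by
  have hCr : (0:ℝ) < (2 * Real.pi) ^ ((d : ℝ) / 2) := Real.rpow_pos_of_pos (by positivity) _
  have hd1 : dotC k (w (k + k0)) = 0 := by
    rw [hw2, dotC_mul_ind, hdot]; simp
  have heq : Pcoef (fld k0 j0) w k = fun j =>
      (Complex.I / ((2 * Real.pi : ℝ) ^ ((d : ℝ) / 2) : ℝ) *
        ((((k + k0) j0 : ℤ) : ℂ) * (-Complex.I) * c1)) * (if j = j2 then 1 else 0) := by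
    funext j
    rw [Pcoef_fld_eval hkn w k j, hw1, leray_zero, leray_of_dot _ _ hd1, hw2]
    simp only [Pi.zero_apply]
    ring
  rw [heq, cNorm_mul_ind]
  simp only [norm_mul, norm_div, norm_neg, Complex.norm_I, Complex.norm_real,
    Real.norm_eq_abs, Complex.norm_intCast, abs_of_pos hCr]
  try ring

lemma sum_sq_vec {i0 i1 : Fin d} (h : i0 ≠ i1) (x y : ℤ) :
    ∑ i, ((vec i0 i1 x y i : ℝ))^2 = (x:ℝ)^2 + (y:ℝ)^2 := by
  simp only [vec]; exact sum_sq_two i0 i1 h x y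

end TrialAux

open TrialAux

/-- Let `d ≥ 3`, real `p ≥ n > d/2`, and `ℓ ∈ {1,2,3,...}`. Every constant
`K` fulfilling the tame inequality
`‖P(v,w)‖_p ≤ (K/2)(‖v‖_p ‖w‖_{n+1} + ‖v‖_n ‖w‖_{p+1})` satisfies
`K ≥ (√2/(2π)^{d/2}) √(1+(1+4ℓ²)^p) / (ℓ^p (1+ℓ²)^{(n+1)/2} + ℓ^n (1+ℓ²)^{(p+1)/2})`;
in particular this is a lower bound for the sharp constant `K_{pn}`. -/
theorem lower_bound_trial_ell (d : ℕ) (hd : 3 ≤ d) (p n : ℝ) (hpn : n ≤ p)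
    (hn : (d : ℝ) / 2 < n) (ℓ : ℕ) (hℓ : 1 ≤ ℓ) :
    ∀ K : ℝ, tameIneq d p n K →
      Real.sqrt 2 / (2 * Real.pi) ^ ((d : ℝ) / 2) *
          Real.sqrt (1 + (1 + 4 * (ℓ : ℝ) ^ 2) ^ p) /
        ((ℓ : ℝ) ^ p * (1 + (ℓ : ℝ) ^ 2) ^ ((n + 1) / 2) +
          (ℓ : ℝ) ^ n * (1 + (ℓ : ℝ) ^ 2) ^ ((p + 1) / 2)) ≤ K := by
  intro K hK
  classical
  have hd0 : (0:ℕ) < d := by omega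
  have hd1 : (1:ℕ) < d := by omega
  have hd2 : (2:ℕ) < d := by omega
  set i0 : Fin d := ⟨0, hd0⟩ with hi0def
  set i1 : Fin d := ⟨1, hd1⟩ with hi1def
  set i2 : Fin d := ⟨2, hd2⟩ with hi2def
  have h01 : i0 ≠ i1 := Fin.ne_of_val_ne (show (0:ℕ) ≠ 1 by omega)
  have h20 : i2 ≠ i0 := Fin.ne_of_val_ne (show (2:ℕ) ≠ 0 by omega)
  have h21 : i2 ≠ i1 := Fin.ne_of_val_ne (show (2:ℕ) ≠ 1 by omega)
  have hz : (1:ℤ) ≤ (ℓ:ℤ) := by exact_mod_cast hℓ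
  have hl0 : (0:ℝ) < (ℓ:ℝ) := by exact_mod_cast Nat.lt_of_lt_of_le Nat.zero_lt_one hℓ
  -- lattice vectors
  set A : Fin d → ℤ := vec i0 i1 (ℓ:ℤ) 0 with hAdef
  set B : Fin d → ℤ := vec i0 i1 (ℓ:ℤ) 1 with hBdef
  set k1 : Fin d → ℤ := vec i0 i1 (2*(ℓ:ℤ)) 1 with hk1def
  set k2 : Fin d → ℤ := vec i0 i1 0 1 with hk2def
  have hA0 : A ≠ 0 := by rw [hAdef, Ne, vec_eq_zero h01]; rintro ⟨h, -⟩; omega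
  have hB0 : B ≠ 0 := by rw [hBdef, Ne, vec_eq_zero h01]; rintro ⟨-, h⟩; omega
  have hk10 : k1 ≠ 0 := by rw [hk1def, Ne, vec_eq_zero h01]; rintro ⟨-, h⟩; omega
  have hk20 : k2 ≠ 0 := by rw [hk2def, Ne, vec_eq_zero h01]; rintro ⟨-, h⟩; omega
  have hnk10 : -k1 ≠ 0 := neg_ne_zero.mpr hk10
  have hnk20 : -k2 ≠ 0 := neg_ne_zero.mpr hk20
  have hAn : A ≠ -A := by
    rw [hAdef, vec_neg, Ne, vec_inj h01]; rintro ⟨h, -⟩; omega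
  have hBn : B ≠ -B := by
    rw [hBdef, vec_neg, Ne, vec_inj h01]; rintro ⟨-, h⟩; omega
  -- the trial fields
  set v : Coeff d := fld A i1 with hvdef
  set w : Coeff d := fld B i2 with hwdef
  have hwB : w B = fun j => Complex.I * (if j = i2 then 1 else 0) := fld_self
  have hwnB : w (-B) = fun j => (-Complex.I) * (if j = i2 then 1 else 0) := fld_negself hBn
  -- hypotheses of the tame inequality
  have hdv : divFree v := divFree_fld (by rw [hAdef, vec_apply1 h01])
  have hdw : divFree w := divFree_fld (vec_apply_other h20 h21 _ _)
  have hmv : meanZero v := meanZero_fld hA0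
  have hmw : meanZero w := meanZero_fld hB0
  have hrv : realField v := realField_fld hAn
  have hrw : realField w := realField_fld hBn
  have hHv : inHm p v := inHm_fld p hA0 hAn
  have hHw : inHm (p+1) w := inHm_fld (p+1) hB0 hBn
  -- norms of v and w
  have hsv : ∀ m : ℝ, sobNorm m v = Real.sqrt 2 * (ℓ:ℝ) ^ m := by
    intro m
    rw [hvdef, sobNorm_fld m hA0 hAn, hAdef, sum_sq_vec h01]
    rw [show ((ℓ:ℤ):ℝ)^2 + ((0:ℤ):ℝ)^2 = ((ℓ:ℝ))^2 by push_cast; ring]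
    rw [sqrt_two_mul_rpow _ (by positivity), sq_rpow _ (le_of_lt hl0)]
  have hsw : ∀ m : ℝ, sobNorm m w = Real.sqrt 2 * (1 + (ℓ:ℝ)^2) ^ (m/2) := by
    intro m
    rw [hwdef, sobNorm_fld m hB0 hBn, hBdef, sum_sq_vec h01]
    rw [show ((ℓ:ℤ):ℝ)^2 + ((1:ℤ):ℝ)^2 = 1 + ((ℓ:ℝ))^2 by push_cast; ring]
    rw [sqrt_two_mul_rpow _ (by positivity)]
  -- vector arithmetic
  have e1 : k1 - A = B := by
    rw [hk1def, hAdef, hBdef, vec_sub]; exact (vec_inj h01).mpr ⟨by ring, by ring⟩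
  have e2 : -k1 + A = -B := by
    rw [hk1def, hAdef, hBdef, vec_neg, vec_neg, vec_add]
    exact (vec_inj h01).mpr ⟨by ring, by ring⟩
  have e3 : k2 + A = B := by
    rw [hk2def, hAdef, hBdef, vec_add]; exact (vec_inj h01).mpr ⟨by ring, by ring⟩
  have e4 : -k2 - A = -B := by
    rw [hk2def, hAdef, hBdef, vec_neg, vec_neg, vec_sub]
    exact (vec_inj h01).mpr ⟨by ring, by ring⟩
  have hBA : B + A = k1 := by
    rw [hk1def, hAdef, hBdef, vec_add]; exact (vec_inj h01).mpr ⟨by ring, by ring⟩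
  have hBA' : -B + A = -k2 := by
    rw [hk2def, hAdef, hBdef, vec_neg, vec_neg, vec_add]
    exact (vec_inj h01).mpr ⟨by ring, by ring⟩
  have hBA'' : B - A = k2 := by
    rw [hk2def, hAdef, hBdef, vec_sub]; exact (vec_inj h01).mpr ⟨by ring, by ring⟩
  have hBA''' : -B - A = -k1 := by
    rw [hk1def, hAdef, hBdef, vec_neg, vec_neg, vec_sub]
    exact (vec_inj h01).mpr ⟨by ring, by ring⟩
  -- vanishing of w at the non-contributing points
  have hne : ∀ x y : ℤ, x ≠ (ℓ:ℤ) ∨ y ≠ 1 → (x ≠ -(ℓ:ℤ) ∨ y ≠ -1) →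
      w (vec i0 i1 x y) = 0 := by
    intro x y hxy hxy'
    apply fld_other
    · rw [hBdef, Ne, vec_inj h01]; rintro ⟨h1, h2⟩; rcases hxy with h | h <;> exact h (by omega)
    · rw [hBdef, vec_neg, Ne, vec_inj h01]; rintro ⟨h1, h2⟩
      rcases hxy' with h | h <;> exact h (by omega)
  have z1 : w (k1 + A) = 0 := by
    rw [hk1def, hAdef, vec_add]; exact hne _ _ (Or.inl (by omega)) (Or.inl (by omega))
  have z2 : w (-k1 - A) = 0 := by
    rw [hk1def, hAdef, vec_neg, vec_sub]
    exact hne _ _ (Or.inl (by omega)) (Or.inl (by omega))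
  have z3 : w (k2 - A) = 0 := by
    rw [hk2def, hAdef, vec_sub]; exact hne _ _ (Or.inl (by omega)) (Or.inr (by omega))
  have z4 : w (-k2 + A) = 0 := by
    rw [hk2def, hAdef, vec_neg, vec_add]
    exact hne _ _ (Or.inr (by omega)) (Or.inl (by omega))
  -- Pcoef values at the four modes
  set Cr : ℝ := (2 * Real.pi) ^ ((d : ℝ) / 2) with hCrdef
  have hCr : (0:ℝ) < Cr := Real.rpow_pos_of_pos (by positivity) _
  have c1v : cNorm (Pcoef v w k1) = 1 / Cr := by
    rw [hvdef, cNorm_Pcoef_left hAn w k1 i2 Complex.I (by rw [e1]; exact hwB) z1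
      (vec_apply_other h20 h21 _ _)]
    rw [e1, hBdef, vec_apply1 h01]
    simp [Complex.norm_I, hCrdef]
  have c2v : cNorm (Pcoef v w (-k1)) = 1 / Cr := by
    rw [hvdef, cNorm_Pcoef_right hAn w (-k1) i2 (-Complex.I) z2 (by rw [e2]; exact hwnB)
      (by rw [hk1def, vec_neg]; exact vec_apply_other h20 h21 _ _)]
    rw [e2, hBdef, vec_neg, vec_apply1 h01]
    simp [Complex.norm_I, hCrdef]
  have c3v : cNorm (Pcoef v w k2) = 1 / Cr := by
    rw [hvdef, cNorm_Pcoef_right hAn w k2 i2 Complex.I z3 (by rw [e3]; exact hwB)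
      (vec_apply_other h20 h21 _ _)]
    rw [e3, hBdef, vec_apply1 h01]
    simp [Complex.norm_I, hCrdef]
  have c4v : cNorm (Pcoef v w (-k2)) = 1 / Cr := by
    rw [hvdef, cNorm_Pcoef_left hAn w (-k2) i2 (-Complex.I) (by rw [e4]; exact hwnB) z4
      (by rw [hk2def, vec_neg]; exact vec_apply_other h20 h21 _ _)]
    rw [e4, hBdef, vec_neg, vec_apply1 h01]
    simp [Complex.norm_I, hCrdef]
  -- support of Pcoef
  set S4 : Finset {k : Fin d → ℤ // k ≠ 0} :=
    {⟨k1, hk10⟩, ⟨-k1, hnk10⟩, ⟨k2, hk20⟩, ⟨-k2, hnk20⟩} with hS4def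
  have hsupp : ∀ k : {k : Fin d → ℤ // k ≠ 0}, k ∉ S4 → Pcoef v w ↑k = 0 := by
    rintro ⟨k, hk⟩ hmem
    rw [hS4def] at hmem
    simp only [Finset.mem_insert, Finset.mem_singleton, Subtype.mk.injEq] at hmem
    push_neg at hmem
    obtain ⟨m1, m2, m3, m4⟩ := hmem
    have w1 : w (k - A) = 0 := by
      apply fld_other
      · intro he; exact m1 (by rw [← hBA, ← he]; ring)
      · intro he; exact m4 (by rw [← hBA', ← he]; ring)
    have w2 : w (k + A) = 0 := by
      apply fld_other
      · intro he; exact m3 (by rw [← hBA'', ← he]; ring)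
      · intro he; exact m2 (by rw [← hBA''', ← he]; ring)
    funext j
    rw [hvdef, Pcoef_fld_eval hAn w k j, w1, w2, leray_zero]
    simp
  -- distinctness of the four modes
  have d12 : k1 ≠ -k1 := by
    rw [hk1def, vec_neg, Ne, vec_inj h01]; rintro ⟨-, h⟩; omega
  have d13 : k1 ≠ k2 := by
    rw [hk1def, hk2def, Ne, vec_inj h01]; rintro ⟨h, -⟩; omega
  have d14 : k1 ≠ -k2 := by
    rw [hk1def, hk2def, vec_neg, Ne, vec_inj h01]; rintro ⟨h, -⟩; omega
  have d23 : -k1 ≠ k2 := by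
    rw [hk1def, hk2def, vec_neg, Ne, vec_inj h01]; rintro ⟨h, -⟩; omega
  have d24 : -k1 ≠ -k2 := by
    rw [hk1def, hk2def, vec_neg, vec_neg, Ne, vec_inj h01]; rintro ⟨h, -⟩; omega
  have d34 : k2 ≠ -k2 := by
    rw [hk2def, vec_neg, Ne, vec_inj h01]; rintro ⟨-, h⟩; omega
  -- latNorm values
  have lat1 : latNorm k1 ^ (2*p) = (1 + 4*(ℓ:ℝ)^2) ^ p := by
    rw [hk1def, latNorm_vec h01, sqrt_rpow_two_mul _ (by positivity)]
    congr 1; push_cast; ring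
  have lat2 : latNorm (-k1) ^ (2*p) = (1 + 4*(ℓ:ℝ)^2) ^ p := by rw [latNorm_neg]; exact lat1
  have lat3 : latNorm k2 ^ (2*p) = 1 := by
    rw [hk2def, latNorm_vec h01, sqrt_rpow_two_mul _ (by positivity)]
    norm_num
  have lat4 : latNorm (-k2) ^ (2*p) = 1 := by rw [latNorm_neg]; exact lat3
  -- the sobolev norm of Pcoef v w
  have hXnn : (0:ℝ) ≤ (1 + 4*(ℓ:ℝ)^2) ^ p := Real.rpow_nonneg (by positivity) _
  have hsum : (∑ k ∈ S4, latNorm (k : Fin d → ℤ) ^ (2*p) * cNorm (Pcoef v w ↑k) ^ 2)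
      = (Real.sqrt 2 * Real.sqrt (1 + (1 + 4*(ℓ:ℝ)^2) ^ p) / Cr) ^ 2 := by
    rw [hS4def]
    rw [Finset.sum_insert (by
        simp only [Finset.mem_insert, Finset.mem_singleton, Subtype.mk.injEq]
        push_neg; exact ⟨d12, d13, d14⟩),
      Finset.sum_insert (by
        simp only [Finset.mem_insert, Finset.mem_singleton, Subtype.mk.injEq]
        push_neg; exact ⟨d23, d24⟩),
      Finset.sum_insert (by
        simp only [Finset.mem_singleton, Subtype.mk.injEq]; exact d34),
      Finset.sum_singleton]
    rw [lat1, lat2, lat3, lat4, c1v, c2v, c3v, c4v]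
    have e5 : Real.sqrt 2 ^ 2 = (2:ℝ) := Real.sq_sqrt (by norm_num)
    have e6 : Real.sqrt (1 + (1 + 4*(ℓ:ℝ)^2) ^ p) ^ 2 = 1 + (1 + 4*(ℓ:ℝ)^2) ^ p :=
      Real.sq_sqrt (by positivity)
    have e7 : (Real.sqrt 2 * Real.sqrt (1 + (1 + 4*(ℓ:ℝ)^2) ^ p) / Cr) ^ 2
        = 2 * (1 + (1 + 4*(ℓ:ℝ)^2) ^ p) / Cr ^ 2 := by
      rw [show (Real.sqrt 2 * Real.sqrt (1 + (1 + 4*(ℓ:ℝ)^2)^p) / Cr)^2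
          = Real.sqrt 2 ^ 2 * Real.sqrt (1 + (1 + 4*(ℓ:ℝ)^2)^p) ^ 2 / Cr ^ 2 from by ring,
        e5, e6]
    rw [e7]
    have hCrne : Cr ≠ 0 := ne_of_gt hCr
    field_simp
    ring
  have hsobP : sobNorm p (Pcoef v w)
      = Real.sqrt 2 * Real.sqrt (1 + (1 + 4*(ℓ:ℝ)^2) ^ p) / Cr := by
    rw [sobNorm_of_support p _ S4 hsupp, hsum,
      Real.sqrt_sq (by positivity)]
  -- apply the tame inequality
  have hmain := hK v w hdv hdw hmv hmw hrv hrw hHv hHw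
  rw [hsobP, hsv p, hsv n, hsw (n+1), hsw (p+1)] at hmain
  have h2 : Real.sqrt 2 * Real.sqrt 2 = 2 := Real.mul_self_sqrt (by norm_num)
  set Y1 : ℝ := (1 + (ℓ:ℝ)^2) ^ ((n+1)/2) with hY1
  set Y2 : ℝ := (1 + (ℓ:ℝ)^2) ^ ((p+1)/2) with hY2
  have hrhs : K / 2 * (Real.sqrt 2 * (ℓ:ℝ)^p * (Real.sqrt 2 * Y1)
      + Real.sqrt 2 * (ℓ:ℝ)^n * (Real.sqrt 2 * Y2))
      = K * ((ℓ:ℝ)^p * Y1 + (ℓ:ℝ)^n * Y2) := by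
    linear_combination (K / 2 * ((ℓ:ℝ)^p * Y1 + (ℓ:ℝ)^n * Y2)) * h2
  rw [hrhs] at hmain
  have hD : (0:ℝ) < (ℓ:ℝ)^p * Y1 + (ℓ:ℝ)^n * Y2 := by
    have := Real.rpow_pos_of_pos hl0 p
    have := Real.rpow_pos_of_pos hl0 n
    have hY1p : (0:ℝ) < Y1 := Real.rpow_pos_of_pos (by positivity) _
    have hY2p : (0:ℝ) < Y2 := Real.rpow_pos_of_pos (by positivity) _
    positivity
  rw [div_le_iff₀ hD]
  calc Real.sqrt 2 / Cr * Real.sqrt (1 + (1 + 4*(ℓ:ℝ)^2) ^ p)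
      = Real.sqrt 2 * Real.sqrt (1 + (1 + 4*(ℓ:ℝ)^2) ^ p) / Cr := by ring
    _ ≤ K * ((ℓ:ℝ)^p * Y1 + (ℓ:ℝ)^n * Y2) := hmain
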